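/- Let k ≥ 1 and set x_{m−k}* = c·log(1 + 1/k) with c = ε_m(m−1). Then the ν₀-mass (with density 1/x²) of the triangular hat function centered at x_{m−k}* over [x_{m−k−1}*, x_{m−k+1}*], normalized by μ_m = 1/c, admits the expansions ∫_{x_{m−k−1}*}^{x_{m−k}*} Ṽ_{m−k}(x) ν₀(dx) = 1/2 − 1/(6k) + 5/(24k²) + O(1/k³) and ∫_{x_{m−k}*}^{x_{m−k+1}*} Ṽ_{m−k}(x) ν₀(dx) = 1/2 + 1/(6k) + 1/(24k²) + O(1/k³) as k → ∞. -/

import Mathlib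

open Filter Asymptotics MeasureTheory

open Real

lemma LT3 (u : ℝ) (h0 : 0 < u) (h8 : u ≤ 1/8) :
    |Real.log (1+u) - (u - u^2/2 + u^3/3)| ≤ 2*u^4 := by
  have h := Real.abs_log_sub_add_sum_range_le (x := -u) (by rw [abs_of_nonpos (by linarith)]; linarith) 3
  simp only [Finset.sum_range_succ, Finset.sum_range_zero] at h
  rw [abs_of_nonpos (by linarith : -u ≤ 0)] at h
  norm_num at h
  ring_nf at h ⊢
  refine h.trans ?_
  rw [mul_inv_le_iff₀ (by linarith)]; nlinarith [pow_pos h0 4]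

lemma LT4 (u : ℝ) (h0 : 0 < u) (h8 : u ≤ 1/8) :
    |Real.log (1+u) - (u - u^2/2 + u^3/3 - u^4/4)| ≤ 2*u^5 := by
  have h := Real.abs_log_sub_add_sum_range_le (x := -u) (by rw [abs_of_nonpos (by linarith)]; linarith) 4
  simp only [Finset.sum_range_succ, Finset.sum_range_zero] at h
  rw [abs_of_nonpos (by linarith : -u ≤ 0)] at h
  norm_num at h
  ring_nf at h ⊢
  refine h.trans ?_
  rw [mul_inv_le_iff₀ (by linarith)]; nlinarith [pow_pos h0 5]

lemma LT4b (u : ℝ) (h0 : 0 < u) (h8 : u ≤ 1/8) :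
    |Real.log (1+2*u) - (2*u - 2*u^2 + 8*u^3/3 - 4*u^4)| ≤ 43*u^5 := by
  have h := Real.abs_log_sub_add_sum_range_le (x := -(2*u)) (by rw [abs_of_nonpos (by linarith)]; linarith) 4
  simp only [Finset.sum_range_succ, Finset.sum_range_zero] at h
  rw [abs_of_nonpos (by linarith : -(2*u) ≤ 0)] at h
  norm_num at h
  ring_nf at h ⊢
  refine h.trans ?_
  have h34 : (1 - u*2)⁻¹ ≤ 4/3 := by
    rw [← one_div]
    have := one_div_le_one_div_of_le (by norm_num : (0:ℝ) < 3/4) (by linarith : (3:ℝ)/4 ≤ 1 - u*2)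
    linarith
  nlinarith [pow_pos h0 5, mul_le_mul_of_nonneg_left h34 (pow_pos h0 5).le]

lemma LT2n (v : ℝ) (h0 : 0 < v) (h8 : v ≤ 1/64) :
    |(-Real.log (1-v)) - (v + v^2/2)| ≤ 2*v^3 := by
  have h := Real.abs_log_sub_add_sum_range_le (x := v) (by rw [abs_of_nonneg h0.le]; linarith) 2
  simp only [Finset.sum_range_succ, Finset.sum_range_zero] at h
  rw [abs_of_nonneg h0.le] at h
  norm_num at h
  have e2 : (-Real.log (1-v)) - (v + v^2/2) = -((v + v^2/2) + Real.log (1-v)) := by ring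
  rw [e2, abs_neg]
  ring_nf at h ⊢
  refine h.trans ?_
  rw [mul_inv_le_iff₀ (by linarith)]; nlinarith [pow_pos h0 3]

lemma ETA (w : ℝ) (h0 : 0 < w) (h8 : w ≤ 1/2) :
    |(-Real.log (1-w) - w) - (w^2/2 + w^3/3 + w^4/4)| ≤ 2*w^5 := by
  have h := Real.abs_log_sub_add_sum_range_le (x := w) (by rw [abs_of_nonneg h0.le]; linarith) 4
  simp only [Finset.sum_range_succ, Finset.sum_range_zero] at h
  rw [abs_of_nonneg h0.le] at h
  norm_num at h
  have e2 : (-Real.log (1-w) - w) - (w^2/2 + w^3/3 + w^4/4)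
      = -((w + w^2/2 + w^3/3 + w^4/4) + Real.log (1-w)) := by ring
  rw [e2, abs_neg]
  ring_nf at h ⊢
  refine h.trans ?_
  rw [mul_inv_le_iff₀ (by linarith)]; nlinarith [pow_pos h0 5]

lemma PSI (w : ℝ) (h0 : 0 < w) (h8 : w ≤ 1/2) :
    |(w - Real.log (1+w)) - (w^2/2 - w^3/3 + w^4/4)| ≤ 2*w^5 := by
  have h := Real.abs_log_sub_add_sum_range_le (x := -w) (by rw [abs_of_nonpos (by linarith)]; linarith) 4
  simp only [Finset.sum_range_succ, Finset.sum_range_zero] at h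
  rw [abs_of_nonpos (by linarith : -w ≤ 0)] at h
  norm_num at h
  have e2 : (w - Real.log (1+w)) - (w^2/2 - w^3/3 + w^4/4)
      = -((-w + w^2/2 - w^3/3 + w^4/4) + Real.log (1+w)) := by ring
  rw [e2, abs_neg]
  ring_nf at h ⊢
  refine h.trans ?_
  rw [mul_inv_le_iff₀ (by linarith)]; nlinarith [pow_pos h0 5]

lemma Rbound1 (u : ℝ) (h0 : 0 < u) (h8 : u ≤ 1/8) :
    |9/4 - 547/96*u + 1711/288*u^2 + 69449/3456*u^3 - 163715/2592*u^4
      + 2049439/20736*u^5 - 621143/7776*u^6 + 578281/15552*u^7 + 43/648*u^8 - 35/3888*u^9| ≤ 4 := by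
  have q2 : (0:ℝ) ≤ u^2 := by positivity
  have q3 : (0:ℝ) ≤ u^3 := by positivity
  have q4 : (0:ℝ) ≤ u^4 := by positivity
  have q5 : (0:ℝ) ≤ u^5 := by positivity
  have q6 : (0:ℝ) ≤ u^6 := by positivity
  have q7 : (0:ℝ) ≤ u^7 := by positivity
  have q8 : (0:ℝ) ≤ u^8 := by positivity
  have c2 : u^2 ≤ u/8 := by nlinarith
  have c3 : u^3 ≤ u^2/8 := by nlinarith
  have c4 : u^4 ≤ u^3/8 := by nlinarith
  have c5 : u^5 ≤ u^4/8 := by nlinarith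
  have c6 : u^6 ≤ u^5/8 := by nlinarith
  have c7 : u^7 ≤ u^6/8 := by nlinarith
  have c8 : u^8 ≤ u^7/8 := by nlinarith
  have q9 : (0:ℝ) ≤ u^9 := by positivity
  have c9 : u^9 ≤ u^8/8 := by nlinarith
  rw [abs_le]
  constructor <;> linarith

lemma Rbound2 (u : ℝ) (h0 : 0 < u) (h8 : u ≤ 1/8) :
    |25/96*u - 13/288*u^2 + 1025/3456*u^3 - 161/5184*u^4 + 743/6912*u^5
      - 25/7776*u^6 + 181/15552*u^7 + 1/1944*u^8 - 1/3888*u^9| ≤ 1 := by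
  have q2 : (0:ℝ) ≤ u^2 := by positivity
  have q3 : (0:ℝ) ≤ u^3 := by positivity
  have q4 : (0:ℝ) ≤ u^4 := by positivity
  have q5 : (0:ℝ) ≤ u^5 := by positivity
  have q6 : (0:ℝ) ≤ u^6 := by positivity
  have q7 : (0:ℝ) ≤ u^7 := by positivity
  have q8 : (0:ℝ) ≤ u^8 := by positivity
  have c2 : u^2 ≤ u/8 := by nlinarith
  have c3 : u^3 ≤ u^2/8 := by nlinarith
  have c4 : u^4 ≤ u^3/8 := by nlinarith
  have c5 : u^5 ≤ u^4/8 := by nlinarith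
  have c6 : u^6 ≤ u^5/8 := by nlinarith
  have c7 : u^7 ≤ u^6/8 := by nlinarith
  have c8 : u^8 ≤ u^7/8 := by nlinarith
  have q9 : (0:ℝ) ≤ u^9 := by positivity
  have c9 : u^9 ≤ u^8/8 := by nlinarith
  rw [abs_le]
  constructor <;> linarith

set_option maxHeartbeats 1000000 in
lemma core1 (u B D N : ℝ) (h0 : 0 < u) (h8 : u ≤ 1/8)
    (hBl : u/2 ≤ B) (hBu : B ≤ u)
    (hB3 : |B - (u - u^2/2 + u^3/3)| ≤ 2*u^4)
    (hD : |D - (u^2 - 2*u^3 + 7*u^4/2)| ≤ 47*u^5)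
    (hN : |N - ((D/B)^2/2 + (D/B)^3/3 + (D/B)^4/4)| ≤ 2048*u^5) :
    |N/D - (1/2 - u/6 + 5*u^2/24)| ≤ 20000*u^3 := by
  obtain ⟨p, hpdef⟩ : ∃ t : ℝ, t = 1/2 - u/6 + 5*u^2/24 := ⟨_, rfl⟩
  obtain ⟨Tb, hTbdef⟩ : ∃ t : ℝ, t = u - u^2/2 + u^3/3 := ⟨_, rfl⟩
  obtain ⟨Td, hTddef⟩ : ∃ t : ℝ, t = u^2 - 2*u^3 + 7*u^4/2 := ⟨_, rfl⟩
  rw [show (1:ℝ)/2 - u/6 + 5*u^2/24 = p from hpdef.symm]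
  rw [show u - u^2/2 + u^3/3 = Tb from hTbdef.symm] at hB3
  rw [show u^2 - 2*u^3 + 7*u^4/2 = Td from hTddef.symm] at hD
  have hu20 : (0:ℝ) ≤ u^2 := by positivity
  have hu30 : (0:ℝ) ≤ u^3 := by positivity
  have hu40 : (0:ℝ) ≤ u^4 := by positivity
  have hu50 : (0:ℝ) ≤ u^5 := by positivity
  have hu60 : (0:ℝ) ≤ u^6 := by positivity
  have hu90 : (0:ℝ) ≤ u^9 := by positivity
  have hc2 : u^2 ≤ u/8 := by
    calc u^2 = u*u := by ring
      _ ≤ u*(1/8) := by apply mul_le_mul_of_nonneg_left h8 h0.le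
      _ = u/8 := by ring
  have hc3 : u^3 ≤ u^2/8 := by
    calc u^3 = u^2*u := by ring
      _ ≤ u^2*(1/8) := by apply mul_le_mul_of_nonneg_left h8 hu20
      _ = u^2/8 := by ring
  have hc4 : u^4 ≤ u^3/8 := by
    calc u^4 = u^3*u := by ring
      _ ≤ u^3*(1/8) := by apply mul_le_mul_of_nonneg_left h8 hu30
      _ = u^3/8 := by ring
  have hc5 : u^5 ≤ u^4/8 := by
    calc u^5 = u^4*u := by ring
      _ ≤ u^4*(1/8) := by apply mul_le_mul_of_nonneg_left h8 hu40
      _ = u^4/8 := by ring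
  have hc6 : u^6 ≤ u^5/8 := by
    calc u^6 = u^5*u := by ring
      _ ≤ u^5*(1/8) := by apply mul_le_mul_of_nonneg_left h8 hu50
      _ = u^5/8 := by ring
  have hDab := abs_le.1 hD
  have hDl : u^2/2 ≤ D := by linarith [hDab.1]
  have hDu : D ≤ 2*u^2 := by linarith [hDab.2]
  have hD0 : (0:ℝ) < D := lt_of_lt_of_le (by positivity) hDl
  have hBpos : (0:ℝ) < B := by linarith
  have hB0 : (0:ℝ) ≤ B := hBpos.le
  have heab := abs_le.1 hB3
  have hfab := abs_le.1 hD
  have hTbl : u/2 ≤ Tb := by rw [hTbdef]; linarith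
  have hTbu : Tb ≤ u := by rw [hTbdef]; linarith
  have hTb0 : (0:ℝ) ≤ Tb := by linarith
  have hTdl : (0:ℝ) ≤ Td := by rw [hTddef]; linarith
  have hTdu : Td ≤ 2*u^2 := by rw [hTddef]; linarith
  have hp0 : 0 ≤ p := by rw [hpdef]; linarith
  have hp1 : p ≤ 1 := by rw [hpdef]; linarith
  -- basic power bounds
  have hB2 : B^2 ≤ u^2 := pow_le_pow_left₀ hB0 hBu 2
  have hB3' : B^3 ≤ u^3 := pow_le_pow_left₀ hB0 hBu 3
  have hTb2 : Tb^2 ≤ u^2 := pow_le_pow_left₀ hTb0 hTbu 2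
  have hTb3 : Tb^3 ≤ u^3 := pow_le_pow_left₀ hTb0 hTbu 3
  have hTb4 : Tb^4 ≤ u^4 := pow_le_pow_left₀ hTb0 hTbu 4
  have hD2 : D^2 ≤ 4*u^4 := by
    calc D^2 ≤ (2*u^2)^2 := pow_le_pow_left₀ hD0.le hDu 2
      _ = 4*u^4 := by ring
  have hD3 : D^3 ≤ 8*u^6 := by
    calc D^3 ≤ (2*u^2)^3 := pow_le_pow_left₀ hD0.le hDu 3
      _ = 8*u^6 := by ring
  have hTd2 : Td^2 ≤ 4*u^4 := by
    calc Td^2 ≤ (2*u^2)^2 := pow_le_pow_left₀ hTdl hTdu 2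
      _ = 4*u^4 := by ring
  have hTd3 : Td^3 ≤ 8*u^6 := by
    calc Td^3 ≤ (2*u^2)^3 := pow_le_pow_left₀ hTdl hTdu 3
      _ = 8*u^6 := by ring
  -- W1 bound
  have hsum0 : 0 ≤ B^3+B^2*Tb+B*Tb^2+Tb^3 := by positivity
  have hsum : B^3+B^2*Tb+B*Tb^2+Tb^3 ≤ 4*u^3 := by
    have m1 : B^2*Tb ≤ u^2*u := mul_le_mul hB2 hTbu hTb0 hu20
    have m2 : B*Tb^2 ≤ u*u^2 := mul_le_mul hBu hTb2 (sq_nonneg Tb) h0.le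
    have e1 : u^2*u = u^3 := by ring
    have e2 : u*u^2 = u^3 := by ring
    rw [e1] at m1; rw [e2] at m2
    linarith
  have hW1 : |D^2*(B+Tb)/2 + D^3/3 - p*D*(B^3+B^2*Tb+B*Tb^2+Tb^3)| ≤ 13*u^5 := by
    have hm0 : 0 ≤ p*D*(B^3+B^2*Tb+B*Tb^2+Tb^3) := by positivity
    have hm : p*D*(B^3+B^2*Tb+B*Tb^2+Tb^3) ≤ 8*u^5 := by
      have h1 : D*(B^3+B^2*Tb+B*Tb^2+Tb^3) ≤ (2*u^2)*(4*u^3) :=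
        mul_le_mul hDu hsum hsum0 (by positivity)
      have h2 : p*(D*(B^3+B^2*Tb+B*Tb^2+Tb^3)) ≤ 1*(D*(B^3+B^2*Tb+B*Tb^2+Tb^3)) :=
        mul_le_mul_of_nonneg_right hp1 (mul_nonneg hD0.le hsum0)
      calc p*D*(B^3+B^2*Tb+B*Tb^2+Tb^3) = p*(D*(B^3+B^2*Tb+B*Tb^2+Tb^3)) := by ring
        _ ≤ 1*(D*(B^3+B^2*Tb+B*Tb^2+Tb^3)) := h2
        _ ≤ 1*((2*u^2)*(4*u^3)) := by linarith
        _ = 8*u^5 := by ring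
    have hb1 : D^2*(B+Tb) ≤ (4*u^4)*(2*u) :=
      mul_le_mul hD2 (by linarith) (by linarith) (by positivity)
    have hb1' : (4*u^4)*(2*u) = 8*u^5 := by ring
    rw [hb1'] at hb1
    have n1 : 0 ≤ D^2*(B+Tb)/2 := by positivity
    have n2 : 0 ≤ D^3/3 := by positivity
    rw [abs_le]
    constructor
    · linarith only [hm, hm0, hb1, n1, n2, hu50]
    · linarith only [hm, hm0, hb1, n1, n2, hD3, hc6, hu50]
  -- W2 bound
  have hW2 : |(D+Td)*Tb^2/2 + (D^2+D*Td+Td^2)*Tb/3 + (D^3+D^2*Td+D*Td^2+Td^3)/4 - p*Tb^4| ≤ 5*u^4 := by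
    have m1 : D*Td ≤ (2*u^2)*(2*u^2) := mul_le_mul hDu hTdu hTdl (by positivity)
    have em1 : (2*u^2)*(2*u^2) = 4*u^4 := by ring
    rw [em1] at m1
    have hq1 : D^2+D*Td+Td^2 ≤ 12*u^4 := by linarith
    have hq10 : 0 ≤ D^2+D*Td+Td^2 := by positivity
    have m2 : D^2*Td ≤ (4*u^4)*(2*u^2) := mul_le_mul hD2 hTdu hTdl (by positivity)
    have m3 : D*Td^2 ≤ (2*u^2)*(4*u^4) := mul_le_mul hDu hTd2 (sq_nonneg Td) (by positivity)
    have em2 : (4*u^4)*(2*u^2) = 8*u^6 := by ring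
    have em3 : (2*u^2)*(4*u^4) = 8*u^6 := by ring
    rw [em2] at m2; rw [em3] at m3
    have hq2 : D^3+D^2*Td+D*Td^2+Td^3 ≤ 32*u^6 := by linarith
    have hq20 : 0 ≤ D^3+D^2*Td+D*Td^2+Td^3 := by positivity
    have hpTb : p*Tb^4 ≤ u^4 := by
      calc p*Tb^4 ≤ 1*Tb^4 := mul_le_mul_of_nonneg_right hp1 (by positivity)
        _ = Tb^4 := by ring
        _ ≤ u^4 := hTb4
    have hpTb0 : 0 ≤ p*Tb^4 := by positivity
    have hb1 : (D+Td)*Tb^2 ≤ (4*u^2)*u^2 :=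
      mul_le_mul (by linarith) hTb2 (sq_nonneg Tb) (by positivity)
    have hb2 : (D^2+D*Td+Td^2)*Tb ≤ (12*u^4)*u := mul_le_mul hq1 hTbu hTb0 (by positivity)
    have e1 : (4*u^2)*u^2 = 4*u^4 := by ring
    have e2 : (12*u^4)*u = 12*u^5 := by ring
    rw [e1] at hb1; rw [e2] at hb2
    have n1 : 0 ≤ (D+Td)*Tb^2/2 := by positivity
    have n2 : 0 ≤ (D^2+D*Td+Td^2)*Tb/3 := by positivity
    have n3 : 0 ≤ (D^3+D^2*Td+D*Td^2+Td^3)/4 := by positivity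
    rw [abs_le]
    constructor
    · linarith only [hpTb, hpTb0, n1, n2, n3, hu40]
    · linarith only [hb1, hb2, hq2, hpTb0, n1, n2, n3, hc5, hc6, hu40, hu50, hu60]
  -- step 3
  have hstep3 : Td^2*Tb^2/2 + Td^3*Tb/3 + Td^4/4 - p*Td*Tb^4
      = u^9 * (9/4 - 547/96*u + 1711/288*u^2 + 69449/3456*u^3 - 163715/2592*u^4
        + 2049439/20736*u^5 - 621143/7776*u^6 + 578281/15552*u^7 + 43/648*u^8 - 35/3888*u^9) := by
    rw [hTbdef, hTddef, hpdef]; ring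
  have hQBb : |D^2*B^2/2 + D^3*B/3 + D^4/4 - p*D*B^4| ≤ 270*u^9 := by
    have t1 : |(B - Tb) * (D^2*(B+Tb)/2 + D^3/3 - p*D*(B^3+B^2*Tb+B*Tb^2+Tb^3))| ≤ 26*u^9 := by
      rw [abs_mul]
      calc |B - Tb| * |D^2*(B+Tb)/2 + D^3/3 - p*D*(B^3+B^2*Tb+B*Tb^2+Tb^3)|
          ≤ (2*u^4) * (13*u^5) := mul_le_mul hB3 hW1 (abs_nonneg _) (by positivity)
        _ = 26*u^9 := by ring
    have t2 : |(D - Td) * ((D+Td)*Tb^2/2 + (D^2+D*Td+Td^2)*Tb/3 + (D^3+D^2*Td+D*Td^2+Td^3)/4 - p*Tb^4)| ≤ 235*u^9 := by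
      rw [abs_mul]
      calc |D - Td| * |(D+Td)*Tb^2/2 + (D^2+D*Td+Td^2)*Tb/3 + (D^3+D^2*Td+D*Td^2+Td^3)/4 - p*Tb^4|
          ≤ (47*u^5) * (5*u^4) := mul_le_mul hD hW2 (abs_nonneg _) (by positivity)
        _ = 235*u^9 := by ring
    have t3 : |Td^2*Tb^2/2 + Td^3*Tb/3 + Td^4/4 - p*Td*Tb^4| ≤ 4*u^9 := by
      rw [hstep3, abs_mul, abs_of_nonneg hu90]
      calc u^9 * |9/4 - 547/96*u + 1711/288*u^2 + 69449/3456*u^3 - 163715/2592*u^4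
            + 2049439/20736*u^5 - 621143/7776*u^6 + 578281/15552*u^7 + 43/648*u^8 - 35/3888*u^9|
          ≤ u^9 * 4 := mul_le_mul_of_nonneg_left (Rbound1 u h0 h8) hu90
        _ = 4*u^9 := by ring
    have split : D^2*B^2/2 + D^3*B/3 + D^4/4 - p*D*B^4
        = (B - Tb) * (D^2*(B+Tb)/2 + D^3/3 - p*D*(B^3+B^2*Tb+B*Tb^2+Tb^3))
        + (D - Td) * ((D+Td)*Tb^2/2 + (D^2+D*Td+Td^2)*Tb/3 + (D^3+D^2*Td+D*Td^2+Td^3)/4 - p*Tb^4)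
        + (Td^2*Tb^2/2 + Td^3*Tb/3 + Td^4/4 - p*Td*Tb^4) := by ring
    calc |D^2*B^2/2 + D^3*B/3 + D^4/4 - p*D*B^4|
        ≤ 26*u^9 + 235*u^9 + 4*u^9 := by
          rw [split]
          refine (abs_add_le _ _).trans ?_
          gcongr
          exact (abs_add_le _ _).trans (by gcongr)
      _ ≤ 270*u^9 := by linarith
  -- combine
  have hSQ : (D/B)^2/2 + (D/B)^3/3 + (D/B)^4/4 - p*D
      = (D^2*B^2/2 + D^3*B/3 + D^4/4 - p*D*B^4)/B^4 := by
    field_simp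
  have hB4pos : 0 < B^4 := by positivity
  have hSb : |(D/B)^2/2 + (D/B)^3/3 + (D/B)^4/4 - p*D| ≤ 4320*u^5 := by
    rw [hSQ, abs_div, abs_of_nonneg hB4pos.le, div_le_iff₀ hB4pos]
    have hB4l : u^4/16 ≤ B^4 := by
      calc u^4/16 = (u/2)^4 := by ring
        _ ≤ B^4 := pow_le_pow_left₀ (by linarith) hBl 4
    calc |D^2*B^2/2 + D^3*B/3 + D^4/4 - p*D*B^4| ≤ 270*u^9 := hQBb
      _ = 4320*u^5 * (u^4/16) := by ring
      _ ≤ 4320*u^5 * B^4 := mul_le_mul_of_nonneg_left hB4l (by positivity)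
  have hNum : |N - p*D| ≤ 6368*u^5 := by
    have e : N - p*D = (N - ((D/B)^2/2 + (D/B)^3/3 + (D/B)^4/4))
        + ((D/B)^2/2 + (D/B)^3/3 + (D/B)^4/4 - p*D) := by ring
    rw [e]
    exact (abs_add_le _ _).trans (by linarith)
  have hfin : N / D - p = (N - p*D)/D := by field_simp
  rw [hfin, abs_div, abs_of_nonneg hD0.le, div_le_iff₀ hD0]
  have hDge : 20000*u^3*(u^2/2) ≤ 20000*u^3*D := mul_le_mul_of_nonneg_left hDl (by positivity)
  have e5 : 20000*u^3*(u^2/2) = 10000*u^5 := by ring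
  rw [e5] at hDge
  calc |N - p*D| ≤ 6368*u^5 := hNum
    _ ≤ 10000*u^5 := by linarith
    _ ≤ 20000*u^3*D := hDge

set_option maxHeartbeats 1000000 in
lemma core2 (u B D N : ℝ) (h0 : 0 < u) (h8 : u ≤ 1/8)
    (hBl : u/2 ≤ B) (hBu : B ≤ u)
    (hB3 : |B - (u - u^2/2 + u^3/3)| ≤ 2*u^4)
    (hD : |D - (u^2 + u^4/2)| ≤ 47*u^5)
    (hN : |N - ((D/B)^2/2 - (D/B)^3/3 + (D/B)^4/4)| ≤ 2048*u^5) :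
    |N/D - (1/2 + u/6 + u^2/24)| ≤ 20000*u^3 := by
  obtain ⟨p, hpdef⟩ : ∃ t : ℝ, t = 1/2 + u/6 + u^2/24 := ⟨_, rfl⟩
  obtain ⟨Tb, hTbdef⟩ : ∃ t : ℝ, t = u - u^2/2 + u^3/3 := ⟨_, rfl⟩
  obtain ⟨Td, hTddef⟩ : ∃ t : ℝ, t = u^2 + u^4/2 := ⟨_, rfl⟩
  rw [show (1:ℝ)/2 + u/6 + u^2/24 = p from hpdef.symm]
  rw [show u - u^2/2 + u^3/3 = Tb from hTbdef.symm] at hB3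
  rw [show u^2 + u^4/2 = Td from hTddef.symm] at hD
  have hu20 : (0:ℝ) ≤ u^2 := by positivity
  have hu30 : (0:ℝ) ≤ u^3 := by positivity
  have hu40 : (0:ℝ) ≤ u^4 := by positivity
  have hu50 : (0:ℝ) ≤ u^5 := by positivity
  have hu60 : (0:ℝ) ≤ u^6 := by positivity
  have hu90 : (0:ℝ) ≤ u^9 := by positivity
  have hc2 : u^2 ≤ u/8 := by
    calc u^2 = u*u := by ring
      _ ≤ u*(1/8) := by apply mul_le_mul_of_nonneg_left h8 h0.le
      _ = u/8 := by ring
  have hc3 : u^3 ≤ u^2/8 := by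
    calc u^3 = u^2*u := by ring
      _ ≤ u^2*(1/8) := by apply mul_le_mul_of_nonneg_left h8 hu20
      _ = u^2/8 := by ring
  have hc4 : u^4 ≤ u^3/8 := by
    calc u^4 = u^3*u := by ring
      _ ≤ u^3*(1/8) := by apply mul_le_mul_of_nonneg_left h8 hu30
      _ = u^3/8 := by ring
  have hc5 : u^5 ≤ u^4/8 := by
    calc u^5 = u^4*u := by ring
      _ ≤ u^4*(1/8) := by apply mul_le_mul_of_nonneg_left h8 hu40
      _ = u^4/8 := by ring
  have hc6 : u^6 ≤ u^5/8 := by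
    calc u^6 = u^5*u := by ring
      _ ≤ u^5*(1/8) := by apply mul_le_mul_of_nonneg_left h8 hu50
      _ = u^5/8 := by ring
  have hDab := abs_le.1 hD
  have hDl : u^2/2 ≤ D := by linarith [hDab.1]
  have hDu : D ≤ 2*u^2 := by linarith [hDab.2]
  have hD0 : (0:ℝ) < D := lt_of_lt_of_le (by positivity) hDl
  have hBpos : (0:ℝ) < B := by linarith
  have hB0 : (0:ℝ) ≤ B := hBpos.le
  have heab := abs_le.1 hB3
  have hfab := abs_le.1 hD
  have hTbl : u/2 ≤ Tb := by rw [hTbdef]; linarith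
  have hTbu : Tb ≤ u := by rw [hTbdef]; linarith
  have hTb0 : (0:ℝ) ≤ Tb := by linarith
  have hTdl : (0:ℝ) ≤ Td := by rw [hTddef]; linarith
  have hTdu : Td ≤ 2*u^2 := by rw [hTddef]; linarith
  have hp0 : 0 ≤ p := by rw [hpdef]; linarith
  have hp1 : p ≤ 1 := by rw [hpdef]; linarith
  -- basic power bounds
  have hB2 : B^2 ≤ u^2 := pow_le_pow_left₀ hB0 hBu 2
  have hB3' : B^3 ≤ u^3 := pow_le_pow_left₀ hB0 hBu 3
  have hTb2 : Tb^2 ≤ u^2 := pow_le_pow_left₀ hTb0 hTbu 2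
  have hTb3 : Tb^3 ≤ u^3 := pow_le_pow_left₀ hTb0 hTbu 3
  have hTb4 : Tb^4 ≤ u^4 := pow_le_pow_left₀ hTb0 hTbu 4
  have hD2 : D^2 ≤ 4*u^4 := by
    calc D^2 ≤ (2*u^2)^2 := pow_le_pow_left₀ hD0.le hDu 2
      _ = 4*u^4 := by ring
  have hD3 : D^3 ≤ 8*u^6 := by
    calc D^3 ≤ (2*u^2)^3 := pow_le_pow_left₀ hD0.le hDu 3
      _ = 8*u^6 := by ring
  have hTd2 : Td^2 ≤ 4*u^4 := by
    calc Td^2 ≤ (2*u^2)^2 := pow_le_pow_left₀ hTdl hTdu 2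
      _ = 4*u^4 := by ring
  have hTd3 : Td^3 ≤ 8*u^6 := by
    calc Td^3 ≤ (2*u^2)^3 := pow_le_pow_left₀ hTdl hTdu 3
      _ = 8*u^6 := by ring
  -- W1 bound
  have hsum0 : 0 ≤ B^3+B^2*Tb+B*Tb^2+Tb^3 := by positivity
  have hsum : B^3+B^2*Tb+B*Tb^2+Tb^3 ≤ 4*u^3 := by
    have m1 : B^2*Tb ≤ u^2*u := mul_le_mul hB2 hTbu hTb0 hu20
    have m2 : B*Tb^2 ≤ u*u^2 := mul_le_mul hBu hTb2 (sq_nonneg Tb) h0.le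
    have e1 : u^2*u = u^3 := by ring
    have e2 : u*u^2 = u^3 := by ring
    rw [e1] at m1; rw [e2] at m2
    linarith
  have hW1 : |D^2*(B+Tb)/2 - D^3/3 - p*D*(B^3+B^2*Tb+B*Tb^2+Tb^3)| ≤ 13*u^5 := by
    have hm0 : 0 ≤ p*D*(B^3+B^2*Tb+B*Tb^2+Tb^3) := by positivity
    have hm : p*D*(B^3+B^2*Tb+B*Tb^2+Tb^3) ≤ 8*u^5 := by
      have h1 : D*(B^3+B^2*Tb+B*Tb^2+Tb^3) ≤ (2*u^2)*(4*u^3) :=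
        mul_le_mul hDu hsum hsum0 (by positivity)
      have h2 : p*(D*(B^3+B^2*Tb+B*Tb^2+Tb^3)) ≤ 1*(D*(B^3+B^2*Tb+B*Tb^2+Tb^3)) :=
        mul_le_mul_of_nonneg_right hp1 (mul_nonneg hD0.le hsum0)
      calc p*D*(B^3+B^2*Tb+B*Tb^2+Tb^3) = p*(D*(B^3+B^2*Tb+B*Tb^2+Tb^3)) := by ring
        _ ≤ 1*(D*(B^3+B^2*Tb+B*Tb^2+Tb^3)) := h2
        _ ≤ 1*((2*u^2)*(4*u^3)) := by linarith
        _ = 8*u^5 := by ring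
    have hb1 : D^2*(B+Tb) ≤ (4*u^4)*(2*u) :=
      mul_le_mul hD2 (by linarith) (by linarith) (by positivity)
    have hb1' : (4*u^4)*(2*u) = 8*u^5 := by ring
    rw [hb1'] at hb1
    have n1 : 0 ≤ D^2*(B+Tb)/2 := by positivity
    have n2 : 0 ≤ D^3/3 := by positivity
    rw [abs_le]
    constructor
    · linarith only [hm, hm0, n1, hD3, hc6, hu50]
    · linarith only [hb1, n2, hm0, hu50]
  -- W2 bound
  have hW2 : |(D+Td)*Tb^2/2 - (D^2+D*Td+Td^2)*Tb/3 + (D^3+D^2*Td+D*Td^2+Td^3)/4 - p*Tb^4| ≤ 5*u^4 := by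
    have m1 : D*Td ≤ (2*u^2)*(2*u^2) := mul_le_mul hDu hTdu hTdl (by positivity)
    have em1 : (2*u^2)*(2*u^2) = 4*u^4 := by ring
    rw [em1] at m1
    have hq1 : D^2+D*Td+Td^2 ≤ 12*u^4 := by linarith
    have hq10 : 0 ≤ D^2+D*Td+Td^2 := by positivity
    have m2 : D^2*Td ≤ (4*u^4)*(2*u^2) := mul_le_mul hD2 hTdu hTdl (by positivity)
    have m3 : D*Td^2 ≤ (2*u^2)*(4*u^4) := mul_le_mul hDu hTd2 (sq_nonneg Td) (by positivity)
    have em2 : (4*u^4)*(2*u^2) = 8*u^6 := by ring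
    have em3 : (2*u^2)*(4*u^4) = 8*u^6 := by ring
    rw [em2] at m2; rw [em3] at m3
    have hq2 : D^3+D^2*Td+D*Td^2+Td^3 ≤ 32*u^6 := by linarith
    have hq20 : 0 ≤ D^3+D^2*Td+D*Td^2+Td^3 := by positivity
    have hpTb : p*Tb^4 ≤ u^4 := by
      calc p*Tb^4 ≤ 1*Tb^4 := mul_le_mul_of_nonneg_right hp1 (by positivity)
        _ = Tb^4 := by ring
        _ ≤ u^4 := hTb4
    have hpTb0 : 0 ≤ p*Tb^4 := by positivity
    have hb1 : (D+Td)*Tb^2 ≤ (4*u^2)*u^2 :=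
      mul_le_mul (by linarith) hTb2 (sq_nonneg Tb) (by positivity)
    have hb2 : (D^2+D*Td+Td^2)*Tb ≤ (12*u^4)*u := mul_le_mul hq1 hTbu hTb0 (by positivity)
    have e1 : (4*u^2)*u^2 = 4*u^4 := by ring
    have e2 : (12*u^4)*u = 12*u^5 := by ring
    rw [e1] at hb1; rw [e2] at hb2
    have n1 : 0 ≤ (D+Td)*Tb^2/2 := by positivity
    have n2 : 0 ≤ (D^2+D*Td+Td^2)*Tb/3 := by positivity
    have n3 : 0 ≤ (D^3+D^2*Td+D*Td^2+Td^3)/4 := by positivity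
    rw [abs_le]
    constructor
    · linarith only [hb2, hpTb, n1, n3, hc5, hu40, hu50]
    · linarith only [hb1, hq2, hpTb0, n2, hc5, hc6, hu40, hu50, hu60]
  -- step 3
  have hstep3 : Td^2*Tb^2/2 - Td^3*Tb/3 + Td^4/4 - p*Td*Tb^4
      = u^9 * (25/96*u - 13/288*u^2 + 1025/3456*u^3 - 161/5184*u^4 + 743/6912*u^5
        - 25/7776*u^6 + 181/15552*u^7 + 1/1944*u^8 - 1/3888*u^9) := by
    rw [hTbdef, hTddef, hpdef]; ring
  have hQBb : |D^2*B^2/2 - D^3*B/3 + D^4/4 - p*D*B^4| ≤ 270*u^9 := by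
    have t1 : |(B - Tb) * (D^2*(B+Tb)/2 - D^3/3 - p*D*(B^3+B^2*Tb+B*Tb^2+Tb^3))| ≤ 26*u^9 := by
      rw [abs_mul]
      calc |B - Tb| * |D^2*(B+Tb)/2 - D^3/3 - p*D*(B^3+B^2*Tb+B*Tb^2+Tb^3)|
          ≤ (2*u^4) * (13*u^5) := mul_le_mul hB3 hW1 (abs_nonneg _) (by positivity)
        _ = 26*u^9 := by ring
    have t2 : |(D - Td) * ((D+Td)*Tb^2/2 - (D^2+D*Td+Td^2)*Tb/3 + (D^3+D^2*Td+D*Td^2+Td^3)/4 - p*Tb^4)| ≤ 235*u^9 := by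
      rw [abs_mul]
      calc |D - Td| * |(D+Td)*Tb^2/2 - (D^2+D*Td+Td^2)*Tb/3 + (D^3+D^2*Td+D*Td^2+Td^3)/4 - p*Tb^4|
          ≤ (47*u^5) * (5*u^4) := mul_le_mul hD hW2 (abs_nonneg _) (by positivity)
        _ = 235*u^9 := by ring
    have t3 : |Td^2*Tb^2/2 - Td^3*Tb/3 + Td^4/4 - p*Td*Tb^4| ≤ 4*u^9 := by
      rw [hstep3, abs_mul, abs_of_nonneg hu90]
      calc u^9 * |25/96*u - 13/288*u^2 + 1025/3456*u^3 - 161/5184*u^4 + 743/6912*u^5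
            - 25/7776*u^6 + 181/15552*u^7 + 1/1944*u^8 - 1/3888*u^9|
          ≤ u^9 * 4 := mul_le_mul_of_nonneg_left ((Rbound2 u h0 h8).trans (by norm_num)) hu90
        _ = 4*u^9 := by ring
    have split : D^2*B^2/2 - D^3*B/3 + D^4/4 - p*D*B^4
        = (B - Tb) * (D^2*(B+Tb)/2 - D^3/3 - p*D*(B^3+B^2*Tb+B*Tb^2+Tb^3))
        + (D - Td) * ((D+Td)*Tb^2/2 - (D^2+D*Td+Td^2)*Tb/3 + (D^3+D^2*Td+D*Td^2+Td^3)/4 - p*Tb^4)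
        + (Td^2*Tb^2/2 - Td^3*Tb/3 + Td^4/4 - p*Td*Tb^4) := by ring
    calc |D^2*B^2/2 - D^3*B/3 + D^4/4 - p*D*B^4|
        ≤ 26*u^9 + 235*u^9 + 4*u^9 := by
          rw [split]
          refine (abs_add_le _ _).trans ?_
          gcongr
          exact (abs_add_le _ _).trans (by gcongr)
      _ ≤ 270*u^9 := by linarith
  -- combine
  have hSQ : (D/B)^2/2 - (D/B)^3/3 + (D/B)^4/4 - p*D
      = (D^2*B^2/2 - D^3*B/3 + D^4/4 - p*D*B^4)/B^4 := by
    field_simp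
  have hB4pos : 0 < B^4 := by positivity
  have hSb : |(D/B)^2/2 - (D/B)^3/3 + (D/B)^4/4 - p*D| ≤ 4320*u^5 := by
    rw [hSQ, abs_div, abs_of_nonneg hB4pos.le, div_le_iff₀ hB4pos]
    have hB4l : u^4/16 ≤ B^4 := by
      calc u^4/16 = (u/2)^4 := by ring
        _ ≤ B^4 := pow_le_pow_left₀ (by linarith) hBl 4
    calc |D^2*B^2/2 - D^3*B/3 + D^4/4 - p*D*B^4| ≤ 270*u^9 := hQBb
      _ = 4320*u^5 * (u^4/16) := by ring
      _ ≤ 4320*u^5 * B^4 := mul_le_mul_of_nonneg_left hB4l (by positivity)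
  have hNum : |N - p*D| ≤ 6368*u^5 := by
    have e : N - p*D = (N - ((D/B)^2/2 - (D/B)^3/3 + (D/B)^4/4))
        + ((D/B)^2/2 - (D/B)^3/3 + (D/B)^4/4 - p*D) := by ring
    rw [e]
    exact (abs_add_le _ _).trans (by linarith)
  have hfin : N / D - p = (N - p*D)/D := by field_simp
  rw [hfin, abs_div, abs_of_nonneg hD0.le, div_le_iff₀ hD0]
  have hDge : 20000*u^3*(u^2/2) ≤ 20000*u^3*D := mul_le_mul_of_nonneg_left hDl (by positivity)
  have e5 : 20000*u^3*(u^2/2) = 10000*u^5 := by ring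
  rw [e5] at hDge
  calc |N - p*D| ≤ 6368*u^5 := hNum
    _ ≤ 10000*u^5 := by linarith
    _ ≤ 20000*u^3*D := hDge

set_option maxHeartbeats 1000000 in
lemma key1gen (u B L : ℝ) (h0 : 0 < u) (h8 : u ≤ 1/8)
    (hB3 : |B - (u - u^2/2 + u^3/3)| ≤ 2*u^4)
    (hB4 : |B - (u - u^2/2 + u^3/3 - u^4/4)| ≤ 2*u^5)
    (hL4 : |L - (2*u - 2*u^2 + 8*u^3/3 - 4*u^4)| ≤ 43*u^5)
    (hBu : B ≤ u) :
    |(Real.log B - Real.log (L - B) + (L - B)/B - 1)/(B - (L - B)) - (1/2 - u/6 + 5*u^2/24)|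
      ≤ 20000*u^3 := by
  have hu20 : (0:ℝ) ≤ u^2 := by positivity
  have hu30 : (0:ℝ) ≤ u^3 := by positivity
  have hu40 : (0:ℝ) ≤ u^4 := by positivity
  have hu50 : (0:ℝ) ≤ u^5 := by positivity
  have hc2 : u^2 ≤ u/8 := by
    calc u^2 = u*u := by ring
      _ ≤ u*(1/8) := by apply mul_le_mul_of_nonneg_left h8 h0.le
      _ = u/8 := by ring
  have hc3 : u^3 ≤ u^2/8 := by
    calc u^3 = u^2*u := by ring
      _ ≤ u^2*(1/8) := by apply mul_le_mul_of_nonneg_left h8 hu20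
      _ = u^2/8 := by ring
  have hc4 : u^4 ≤ u^3/8 := by
    calc u^4 = u^3*u := by ring
      _ ≤ u^3*(1/8) := by apply mul_le_mul_of_nonneg_left h8 hu30
      _ = u^3/8 := by ring
  have hc5 : u^5 ≤ u^4/8 := by
    calc u^5 = u^4*u := by ring
      _ ≤ u^4*(1/8) := by apply mul_le_mul_of_nonneg_left h8 hu40
      _ = u^4/8 := by ring
  have hB3ab := abs_le.1 hB3
  have hBl : u/2 ≤ B := by linarith [hB3ab.1]
  have hBpos : 0 < B := by linarith
  have hD : |(B - (L - B)) - (u^2 - 2*u^3 + 7*u^4/2)| ≤ 47*u^5 := by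
    have e : (B - (L - B)) - (u^2 - 2*u^3 + 7*u^4/2)
        = 2*(B - (u - u^2/2 + u^3/3 - u^4/4)) - (L - (2*u - 2*u^2 + 8*u^3/3 - 4*u^4)) := by ring
    rw [e]
    refine (abs_sub _ _).trans ?_
    rw [abs_mul, abs_two]
    linarith [hB4, hL4]
  have hDab := abs_le.1 hD
  have hDl : u^2/2 ≤ B - (L - B) := by linarith [hDab.1]
  have hDu : B - (L - B) ≤ 2*u^2 := by linarith [hDab.2]
  have hD0 : 0 < B - (L - B) := lt_of_lt_of_le (by positivity) hDl
  have hApos : 0 < L - B := by linarith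
  have hw1 : 1 - (B - (L - B))/B = (L - B)/B := by field_simp; ring
  have hlog : Real.log B - Real.log (L - B) = -Real.log (1 - (B - (L - B))/B) := by
    rw [hw1, Real.log_div hApos.ne' hBpos.ne']; ring
  have hwpos : 0 < (B - (L - B))/B := div_pos hD0 hBpos
  have hwle4u : (B - (L - B))/B ≤ 4*u := by
    rw [div_le_iff₀ hBpos]
    have h1 : 4*u*(u/2) ≤ 4*u*B := mul_le_mul_of_nonneg_left hBl (by positivity)
    have e1 : 4*u*(u/2) = 2*u^2 := by ring
    linarith
  have hwhalf : (B - (L - B))/B ≤ 1/2 := le_trans hwle4u (by linarith)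
  have hη := ETA ((B - (L - B))/B) hwpos hwhalf
  have hw5 : ((B - (L - B))/B)^5 ≤ 1024*u^5 := by
    calc ((B - (L - B))/B)^5 ≤ (4*u)^5 := pow_le_pow_left₀ hwpos.le hwle4u 5
      _ = 1024*u^5 := by ring
  have hN : |(Real.log B - Real.log (L - B) + (L - B)/B - 1)
      - (((B - (L - B))/B)^2/2 + ((B - (L - B))/B)^3/3 + ((B - (L - B))/B)^4/4)| ≤ 2048*u^5 := by
    have e : Real.log B - Real.log (L - B) + (L - B)/B - 1
        = -Real.log (1 - (B - (L - B))/B) - (B - (L - B))/B := by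
      rw [hlog]
      have e2 : (L - B)/B - 1 = -((B - (L - B))/B) := by field_simp; ring
      linarith [e2]
    rw [e]
    exact hη.trans (by linarith)
  exact core1 u B (B - (L - B)) _ h0 h8 hBl hBu hB3 hD hN

set_option maxHeartbeats 1000000 in
lemma key2gen (u B Bp : ℝ) (h0 : 0 < u) (h8 : u ≤ 1/8)
    (hB3 : |B - (u - u^2/2 + u^3/3)| ≤ 2*u^4)
    (hBu : B ≤ u)
    (hDt : |(Bp - B) - (u^2 + u^4/2)| ≤ 47*u^5) :
    |(Bp/B - 1 - (Real.log Bp - Real.log B))/(Bp - B) - (1/2 + u/6 + u^2/24)|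
      ≤ 20000*u^3 := by
  have hu20 : (0:ℝ) ≤ u^2 := by positivity
  have hu30 : (0:ℝ) ≤ u^3 := by positivity
  have hu40 : (0:ℝ) ≤ u^4 := by positivity
  have hu50 : (0:ℝ) ≤ u^5 := by positivity
  have hc2 : u^2 ≤ u/8 := by
    calc u^2 = u*u := by ring
      _ ≤ u*(1/8) := by apply mul_le_mul_of_nonneg_left h8 h0.le
      _ = u/8 := by ring
  have hc3 : u^3 ≤ u^2/8 := by
    calc u^3 = u^2*u := by ring
      _ ≤ u^2*(1/8) := by apply mul_le_mul_of_nonneg_left h8 hu20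
      _ = u^2/8 := by ring
  have hc4 : u^4 ≤ u^3/8 := by
    calc u^4 = u^3*u := by ring
      _ ≤ u^3*(1/8) := by apply mul_le_mul_of_nonneg_left h8 hu30
      _ = u^3/8 := by ring
  have hc5 : u^5 ≤ u^4/8 := by
    calc u^5 = u^4*u := by ring
      _ ≤ u^4*(1/8) := by apply mul_le_mul_of_nonneg_left h8 hu40
      _ = u^4/8 := by ring
  have hB3ab := abs_le.1 hB3
  have hBl : u/2 ≤ B := by linarith [hB3ab.1]
  have hBpos : 0 < B := by linarith
  have hDab := abs_le.1 hDt
  have hDl : u^2/2 ≤ Bp - B := by linarith [hDab.1]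
  have hDu : Bp - B ≤ 2*u^2 := by linarith [hDab.2]
  have hD0 : 0 < Bp - B := lt_of_lt_of_le (by positivity) hDl
  have hBppos : 0 < Bp := by linarith
  have hw1 : 1 + (Bp - B)/B = Bp/B := by field_simp; ring
  have hlog : Real.log Bp - Real.log B = Real.log (1 + (Bp - B)/B) := by
    rw [hw1, Real.log_div hBppos.ne' hBpos.ne']
  have hwpos : 0 < (Bp - B)/B := div_pos hD0 hBpos
  have hwle4u : (Bp - B)/B ≤ 4*u := by
    rw [div_le_iff₀ hBpos]
    have h1 : 4*u*(u/2) ≤ 4*u*B := mul_le_mul_of_nonneg_left hBl (by positivity)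
    have e1 : 4*u*(u/2) = 2*u^2 := by ring
    linarith
  have hwhalf : (Bp - B)/B ≤ 1/2 := le_trans hwle4u (by linarith)
  have hψ := PSI ((Bp - B)/B) hwpos hwhalf
  have hw5 : ((Bp - B)/B)^5 ≤ 1024*u^5 := by
    calc ((Bp - B)/B)^5 ≤ (4*u)^5 := pow_le_pow_left₀ hwpos.le hwle4u 5
      _ = 1024*u^5 := by ring
  have hN : |(Bp/B - 1 - (Real.log Bp - Real.log B))
      - (((Bp - B)/B)^2/2 - ((Bp - B)/B)^3/3 + ((Bp - B)/B)^4/4)| ≤ 2048*u^5 := by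
    have e : Bp/B - 1 - (Real.log Bp - Real.log B)
        = (Bp - B)/B - Real.log (1 + (Bp - B)/B) := by
      rw [hlog]
      have e2 : Bp/B - 1 = (Bp - B)/B := by field_simp
      linarith [e2]
    rw [e]
    exact hψ.trans (by linarith)
  exact core2 u B (Bp - B) _ h0 h8 hBl hBu hB3 hDt hN

lemma int1 (c a b : ℝ) (ha : 0 < a) (hab : a < b) :
    ∫ x in Set.Ioc a b, c * ((x - a) / (b - a)) * (x^2)⁻¹
      = c / (b - a) * (Real.log b - Real.log a + a / b - 1) := by
  rw [← intervalIntegral.integral_of_le hab.le]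
  have hF : ∀ x ∈ Set.uIcc a b, HasDerivAt (fun y => c / (b-a) * (Real.log y + a / y))
      (c * ((x - a) / (b - a)) * (x^2)⁻¹) x := by
    intro x hx
    rw [Set.uIcc_of_le hab.le] at hx
    have hx0 : 0 < x := lt_of_lt_of_le ha hx.1
    have h1 : HasDerivAt (fun y : ℝ => Real.log y + a / y) (x⁻¹ + a * (-(x^2)⁻¹)) x := by
      exact (Real.hasDerivAt_log hx0.ne').add (((hasDerivAt_inv hx0.ne').const_mul a).congr_deriv (by ring))
    have := h1.const_mul (c / (b-a))
    refine this.congr_deriv ?_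
    have hba : b - a ≠ 0 := sub_ne_zero.2 hab.ne'
    field_simp
    ring
  have hcont : IntervalIntegrable (fun x => c * ((x - a) / (b - a)) * (x^2)⁻¹) volume a b := by
    apply ContinuousOn.intervalIntegrable
    apply ContinuousOn.mul
    · exact (continuousOn_const.mul ((continuousOn_id.sub continuousOn_const).div_const _))
    · apply ContinuousOn.inv₀ (continuousOn_pow 2)
      intro x hx
      rw [Set.uIcc_of_le hab.le] at hx
      have : 0 < x := lt_of_lt_of_le ha hx.1
      positivity
  rw [intervalIntegral.integral_eq_sub_of_hasDerivAt hF hcont]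
  have hb : 0 < b := ha.trans hab
  have hba : b - a ≠ 0 := sub_ne_zero.2 hab.ne'
  field_simp
  ring

lemma int2 (c a b : ℝ) (ha : 0 < a) (hab : a < b) :
    ∫ x in Set.Ioc a b, c * ((b - x) / (b - a)) * (x^2)⁻¹
      = c / (b - a) * (b / a - 1 - (Real.log b - Real.log a)) := by
  rw [← intervalIntegral.integral_of_le hab.le]
  have hF : ∀ x ∈ Set.uIcc a b, HasDerivAt (fun y => c / (b-a) * (-(b / y) - Real.log y))
      (c * ((b - x) / (b - a)) * (x^2)⁻¹) x := by
    intro x hx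
    rw [Set.uIcc_of_le hab.le] at hx
    have hx0 : 0 < x := lt_of_lt_of_le ha hx.1
    have h1 : HasDerivAt (fun y : ℝ => -(b / y) - Real.log y) (-(b * (-(x^2)⁻¹)) - x⁻¹) x := by
      exact (((hasDerivAt_inv hx0.ne').const_mul b).congr_deriv (by ring)).neg.sub (Real.hasDerivAt_log hx0.ne')
    have := h1.const_mul (c / (b-a))
    refine this.congr_deriv ?_
    have hba : b - a ≠ 0 := sub_ne_zero.2 hab.ne'
    field_simp
  have hcont : IntervalIntegrable (fun x => c * ((b - x) / (b - a)) * (x^2)⁻¹) volume a b := by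
    apply ContinuousOn.intervalIntegrable
    apply ContinuousOn.mul
    · exact (continuousOn_const.mul ((continuousOn_const.sub continuousOn_id).div_const _))
    · apply ContinuousOn.inv₀ (continuousOn_pow 2)
      intro x hx
      rw [Set.uIcc_of_le hab.le] at hx
      have : 0 < x := lt_of_lt_of_le ha hx.1
      positivity
  rw [intervalIntegral.integral_eq_sub_of_hasDerivAt hF hcont]
  have hb : 0 < b := ha.trans hab
  have hba : b - a ≠ 0 := sub_ne_zero.2 hab.ne'
  field_simp
  ring

set_option maxHeartbeats 1000000 in
theorem stmt18 (c : ℝ) (hc : 0 < c) :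
    (fun k : ℕ =>
        (∫ x in Set.Ioc (c * Real.log (1 + 1 / ((k : ℝ) + 1))) (c * Real.log (1 + 1 / (k : ℝ))),
          c * ((x - c * Real.log (1 + 1 / ((k : ℝ) + 1))) /
              (c * Real.log (1 + 1 / (k : ℝ)) - c * Real.log (1 + 1 / ((k : ℝ) + 1)))) *
            (x ^ 2)⁻¹)
        - (1 / 2 - 1 / (6 * (k : ℝ)) + 5 / (24 * (k : ℝ) ^ 2)))
      =O[atTop] (fun k : ℕ => 1 / (k : ℝ) ^ 3) ∧
    (fun k : ℕ =>
        (∫ x in Set.Ioc (c * Real.log (1 + 1 / (k : ℝ))) (c * Real.log (1 + 1 / ((k : ℝ) - 1))),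
          c * ((c * Real.log (1 + 1 / ((k : ℝ) - 1)) - x) /
              (c * Real.log (1 + 1 / ((k : ℝ) - 1)) - c * Real.log (1 + 1 / (k : ℝ)))) *
            (x ^ 2)⁻¹)
        - (1 / 2 + 1 / (6 * (k : ℝ)) + 1 / (24 * (k : ℝ) ^ 2)))
      =O[atTop] (fun k : ℕ => 1 / (k : ℝ) ^ 3) := by
  constructor
  · rw [isBigO_iff]
    refine ⟨20000, ?_⟩
    filter_upwards [Filter.eventually_ge_atTop 8] with k hk
    have hk8 : (8:ℝ) ≤ (k:ℝ) := by exact_mod_cast hk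
    have hkpos : (0:ℝ) < (k:ℝ) := by linarith
    have h0 : 0 < 1/(k:ℝ) := by positivity
    have h8 : 1/(k:ℝ) ≤ 1/8 := by
      apply one_div_le_one_div_of_le (by norm_num) hk8
    set u : ℝ := 1/(k:ℝ) with hu
    -- rewrite the inner logs
    have e1 : (1:ℝ) + 1/((k:ℝ)+1) = (1+2*u)/(1+u) := by
      rw [hu]; field_simp; ring
    have hBpos : 0 < Real.log (1+u) := Real.log_pos (by linarith)
    have hLBpos : 0 < Real.log (1+2*u) - Real.log (1+u) := by
      have := Real.log_lt_log (by linarith : (0:ℝ) < 1+u) (by linarith : 1+u < 1+2*u)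
      linarith
    have e2 : Real.log (1 + 1/((k:ℝ)+1)) = Real.log (1+2*u) - Real.log (1+u) := by
      rw [e1, Real.log_div (by linarith) (by linarith)]
    rw [e2]
    -- the integral
    have ha : 0 < c * (Real.log (1+2*u) - Real.log (1+u)) := by positivity
    have hab : c * (Real.log (1+2*u) - Real.log (1+u)) < c * Real.log (1+u) := by
      have hAB : Real.log (1+2*u) - Real.log (1+u) < Real.log (1+u) := by
        have h2 : Real.log (1+2*u) < 2 * Real.log (1+u) := by
          have e3 : (1+u)^2 = 1 + 2*u + u^2 := by ring
          have := Real.log_lt_log (by linarith : (0:ℝ) < 1+2*u)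
            (by nlinarith : 1+2*u < (1+u)^2)
          rw [Real.log_pow] at this
          push_cast at this
          linarith
        linarith
      exact (mul_lt_mul_iff_right₀ hc).2 hAB
    rw [int1 c _ _ ha hab]
    -- simplify the value
    set B := Real.log (1+u) with hB
    set A := Real.log (1+2*u) - Real.log (1+u) with hA
    have hval : c / (c*B - c*A) * (Real.log (c*B) - Real.log (c*A) + c*A/(c*B) - 1)
        = (Real.log B - Real.log A + A/B - 1)/(B - A) := by
      have hBA : 0 < B - A := by
        have := (mul_lt_mul_iff_right₀ hc).1 hab
        linarith
      rw [Real.log_mul hc.ne' (by positivity), Real.log_mul hc.ne' (by linarith [hLBpos] : A ≠ 0)]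
      rw [mul_div_mul_left A B hc.ne']
      rw [show c*B - c*A = c*(B - A) by ring, div_mul_eq_mul_div]
      rw [show c * (Real.log c + Real.log B - (Real.log c + Real.log A) + A/B - 1)
          = c * (Real.log B - Real.log A + A/B - 1) by ring]
      exact mul_div_mul_left _ _ hc.ne'
    rw [hval]
    have hBu : B ≤ u := by
      have := Real.log_le_sub_one_of_pos (show (0:ℝ) < 1+u by linarith)
      rw [hB]; linarith
    have ep : (1:ℝ)/2 - 1/(6*(k:ℝ)) + 5/(24*(k:ℝ)^2) = 1/2 - u/6 + 5*u^2/24 := by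
      rw [hu]; ring
    rw [ep, Real.norm_eq_abs, Real.norm_eq_abs,
      abs_of_nonneg (by positivity : (0:ℝ) ≤ 1/(k:ℝ)^3),
      show 20000 * (1/(k:ℝ)^3) = 20000*u^3 by rw [hu]; ring]
    exact key1gen u (Real.log (1+u)) (Real.log (1+2*u)) h0 h8
      (LT3 u h0 h8) (LT4 u h0 h8) (LT4b u h0 h8) hBu
  · rw [isBigO_iff]
    refine ⟨20000, ?_⟩
    filter_upwards [Filter.eventually_ge_atTop 8] with k hk
    have hk8 : (8:ℝ) ≤ (k:ℝ) := by exact_mod_cast hk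
    have hkpos : (0:ℝ) < (k:ℝ) := by linarith
    have h0 : 0 < 1/(k:ℝ) := by positivity
    have h8 : 1/(k:ℝ) ≤ 1/8 := by
      apply one_div_le_one_div_of_le (by norm_num) hk8
    set u : ℝ := 1/(k:ℝ) with hu
    have hupos : 0 < u := h0
    have hule : u ≤ 1/8 := h8
    have hu1 : u < 1 := by linarith
    have e1 : (1:ℝ) + 1/((k:ℝ)-1) = 1/(1-u) := by
      have hk1 : ((k:ℝ) - 1) ≠ 0 := by linarith
      have hk0 : (k:ℝ) ≠ 0 := by linarith
      rw [hu, show (1:ℝ) - 1/(k:ℝ) = ((k:ℝ)-1)/(k:ℝ) by field_simp, one_div_div]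
      field_simp; ring
    have e2 : Real.log (1 + 1/((k:ℝ)-1)) = -Real.log (1-u) := by
      rw [e1, one_div, Real.log_inv]
    rw [e2]
    have hBpos : 0 < Real.log (1+u) := Real.log_pos (by linarith)
    -- chain facts
    have hu50 : (0:ℝ) ≤ u^5 := by positivity
    have hc6 : u^6 ≤ u^5/8 := by
      calc u^6 = u^5*u := by ring
        _ ≤ u^5*(1/8) := by apply mul_le_mul_of_nonneg_left hule hu50
        _ = u^5/8 := by ring
    have hDt : |(-Real.log (1-u) - Real.log (1+u)) - (u^2 + u^4/2)| ≤ 47*u^5 := by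
      have em : Real.log (1-u^2) = Real.log (1-u) + Real.log (1+u) := by
        rw [show (1:ℝ)-u^2 = (1-u)*(1+u) by ring,
          Real.log_mul (by linarith : (1:ℝ)-u ≠ 0) (by linarith : (1:ℝ)+u ≠ 0)]
      have h2n := LT2n (u^2) (by positivity) (by nlinarith)
      rw [em] at h2n
      have h2ab := abs_le.1 h2n
      rw [abs_le]
      have e3 : ((u^2)^2 : ℝ)/2 = u^4/2 := by ring
      have e4 : (2*(u^2)^3 : ℝ) = 2*u^6 := by ring
      rw [e3, e4] at *
      constructor
      · nlinarith [h2ab.1]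
      · nlinarith [h2ab.2]
    have hDab := abs_le.1 hDt
    have hu40 : (0:ℝ) ≤ u^4 := by positivity
    have hc5 : u^5 ≤ u^4/8 := by
      calc u^5 = u^4*u := by ring
        _ ≤ u^4*(1/8) := by apply mul_le_mul_of_nonneg_left hule hu40
        _ = u^4/8 := by ring
    have hc4 : u^4 ≤ u^3/8 := by
      have : (0:ℝ) ≤ u^3 := by positivity
      calc u^4 = u^3*u := by ring
        _ ≤ u^3*(1/8) := by apply mul_le_mul_of_nonneg_left hule this
        _ = u^3/8 := by ring
    have hc3 : u^3 ≤ u^2/8 := by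
      have : (0:ℝ) ≤ u^2 := by positivity
      calc u^3 = u^2*u := by ring
        _ ≤ u^2*(1/8) := by apply mul_le_mul_of_nonneg_left hule this
        _ = u^2/8 := by ring
    have hDl : u^2/2 ≤ -Real.log (1-u) - Real.log (1+u) := by linarith [hDab.1]
    have hBppos : 0 < -Real.log (1-u) := by
      have : (0:ℝ) < u^2/2 := by positivity
      linarith
    have ha : 0 < c * Real.log (1+u) := by positivity
    have hab : c * Real.log (1+u) < c * -Real.log (1-u) := by
      apply (mul_lt_mul_iff_right₀ hc).2
      have : (0:ℝ) < u^2/2 := by positivity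
      linarith
    rw [int2 c _ _ ha hab]
    set B := Real.log (1+u) with hB
    set Bp := -Real.log (1-u) with hBp
    have hval : c / (c*Bp - c*B) * (c*Bp/(c*B) - 1 - (Real.log (c*Bp) - Real.log (c*B)))
        = (Bp/B - 1 - (Real.log Bp - Real.log B))/(Bp - B) := by
      rw [Real.log_mul hc.ne' (by positivity : B ≠ 0),
        Real.log_mul hc.ne' (by positivity : Bp ≠ 0)]
      rw [mul_div_mul_left Bp B hc.ne']
      rw [show c*Bp - c*B = c*(Bp - B) by ring, div_mul_eq_mul_div]
      rw [show c * (Bp/B - 1 - (Real.log c + Real.log Bp - (Real.log c + Real.log B)))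
          = c * (Bp/B - 1 - (Real.log Bp - Real.log B)) by ring]
      exact mul_div_mul_left _ _ hc.ne'
    rw [hval]
    have hBu : B ≤ u := by
      have := Real.log_le_sub_one_of_pos (show (0:ℝ) < 1+u by linarith)
      rw [hB]; linarith
    have ep : (1:ℝ)/2 + 1/(6*(k:ℝ)) + 1/(24*(k:ℝ)^2) = 1/2 + u/6 + u^2/24 := by
      rw [hu]; ring
    rw [ep, Real.norm_eq_abs, Real.norm_eq_abs,
      abs_of_nonneg (by positivity : (0:ℝ) ≤ 1/(k:ℝ)^3),
      show 20000 * (1/(k:ℝ)^3) = 20000*u^3 by rw [hu]; ring]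
    exact key2gen u B Bp h0 h8 (LT3 u h0 h8) hBu hDt
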